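/- (Minimal critical spectrum.) For every real δ with |δ| < 1/√(12α): if κ, k ∈ ℝ satisfy d_{c_*(δ)}(iκ, −η_*(δ) + ik) = 0, then κ = 0 and k = 0. -/

import Mathlib

noncomputable def etaStar (α δ : ℝ) : ℝ :=
  if δ = 0 then Real.sqrt α
  else 1 / (|δ| * Real.sqrt 6) * Real.sqrt (1 - Real.sqrt (1 - 12 * δ ^ 2 * α))

noncomputable def cStar (α δ : ℝ) : ℝ :=
  2 * etaStar α δ - 4 * δ ^ 2 * etaStar α δ ^ 3

/-- The dispersion relation at `+∞`: `d_c(λ, ν) = -δ²ν⁴ + ν² + cν + α - λ`. -/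
noncomputable def disp (α δ c : ℝ) (lam ν : ℂ) : ℂ :=
  -(δ : ℂ) ^ 2 * ν ^ 4 + ν ^ 2 + (c : ℂ) * ν + (α : ℂ) - lam

lemma key (α : ℝ) (hα : 0 < α) (δ : ℝ) (hδ : |δ| < 1 / Real.sqrt (12 * α)) :
    α = etaStar α δ ^ 2 - 3 * δ ^ 2 * etaStar α δ ^ 4 ∧ 6 * δ ^ 2 * etaStar α δ ^ 2 < 1 := by
  have h12 : (0:ℝ) < 12 * α := by linarith
  have hs12 : Real.sqrt (12 * α) > 0 := Real.sqrt_pos.mpr h12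
  have hsq : Real.sqrt (12 * α) ^ 2 = 12 * α := Real.sq_sqrt h12.le
  have hδ2 : 12 * δ ^ 2 * α < 1 := by
    have h1 : |δ| * Real.sqrt (12 * α) < 1 := by
      rw [lt_div_iff₀ hs12] at hδ; linarith
    have h2 : (|δ| * Real.sqrt (12 * α)) ^ 2 < 1 := by
      nlinarith [mul_nonneg (abs_nonneg δ) hs12.le, h1]
    calc 12 * δ ^ 2 * α = (|δ| * Real.sqrt (12 * α)) ^ 2 := by
          rw [mul_pow, sq_abs, hsq]; ring
      _ < 1 := h2
  by_cases hd : δ = 0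
  · subst hd
    rw [show etaStar α 0 = Real.sqrt α by simp [etaStar]]
    rw [Real.sq_sqrt hα.le]
    constructor <;> nlinarith
  · simp only [etaStar, if_neg hd]
    set s := Real.sqrt (1 - 12 * δ ^ 2 * α) with hs
    have h1s : (0:ℝ) < 1 - 12 * δ ^ 2 * α := by nlinarith
    have hspos : 0 < s := Real.sqrt_pos.mpr h1s
    have hssq : s ^ 2 = 1 - 12 * δ ^ 2 * α := Real.sq_sqrt h1s.le
    have hsle : s ≤ 1 := by nlinarith [hα, sq_nonneg δ]
    have hd2 : (0:ℝ) < δ ^ 2 := by positivity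
    have h6 : Real.sqrt 6 ^ 2 = 6 := Real.sq_sqrt (by norm_num)
    have hsqrt1s : Real.sqrt (1 - s) ^ 2 = 1 - s := Real.sq_sqrt (by linarith)
    have habs : |δ| ^ 2 = δ ^ 2 := sq_abs δ
    have habspos : (0:ℝ) < |δ| := abs_pos.mpr hd
    have h6pos : (0:ℝ) < Real.sqrt 6 := Real.sqrt_pos.mpr (by norm_num)
    have heta2 : (1 / (|δ| * Real.sqrt 6) * Real.sqrt (1 - s)) ^ 2 = (1 - s) / (6 * δ ^ 2) := by
      field_simp
      rw [hsqrt1s, habs, h6]; ring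
    constructor
    · rw [show (1 / (|δ| * Real.sqrt 6) * Real.sqrt (1 - s)) ^ 4
        = ((1 / (|δ| * Real.sqrt 6) * Real.sqrt (1 - s)) ^ 2) ^ 2 by ring, heta2]
      field_simp
      nlinarith [hssq]
    · rw [heta2]
      have : 6 * δ ^ 2 * ((1 - s) / (6 * δ ^ 2)) = 1 - s := by field_simp
      rw [this]; linarith

theorem stmt2 (α : ℝ) (hα : 0 < α) (δ : ℝ) (hδ : |δ| < 1 / Real.sqrt (12 * α))
    (κ k : ℝ)
    (h : disp α δ (cStar α δ) (Complex.I * (κ : ℂ))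
        (-(etaStar α δ : ℂ) + Complex.I * (k : ℂ)) = 0) :
    κ = 0 ∧ k = 0 := by
  obtain ⟨h1, h2⟩ := key α hα δ hδ
  set η := etaStar α δ with hη
  set c := cStar α δ with hc
  have hcv : c = 2 * η - 4 * δ ^ 2 * η ^ 3 := rfl
  have hsplit : disp α δ c (Complex.I * (κ : ℂ)) (-(η : ℂ) + Complex.I * (k : ℂ))
      = ((-δ^2*(η^4 - 6*η^2*k^2 + k^4) + η^2 - k^2 - c*η + α : ℝ) : ℂ)
        + ((-δ^2*(-4*η^3*k + 4*η*k^3) - 2*η*k + c*k - κ : ℝ) : ℂ) * Complex.I := by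
    rw [disp]
    push_cast
    ring_nf
    simp only [show Complex.I ^ 3 = -Complex.I by rw [pow_succ, Complex.I_sq]; ring,
      show Complex.I ^ 4 = 1 by rw [show (4:ℕ) = 2*2 from rfl, pow_mul, Complex.I_sq]; ring,
      Complex.I_sq]
    ring
  rw [hsplit] at h
  rw [Complex.ext_iff] at h
  simp only [Complex.add_re, Complex.add_im, Complex.ofReal_re, Complex.ofReal_im,
    Complex.mul_re, Complex.mul_im, Complex.I_re, Complex.I_im, Complex.zero_re,
    Complex.zero_im, mul_zero, mul_one, zero_mul, add_zero, zero_add, sub_zero] at h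
  obtain ⟨hre, him⟩ := h
  have hk : k = 0 := by
    have hfac : k ^ 2 * (1 - 6 * δ ^ 2 * η ^ 2 + δ ^ 2 * k ^ 2) = 0 := by
      rw [hcv] at hre; nlinarith [hre, h1]
    have hpos : 0 < 1 - 6 * δ ^ 2 * η ^ 2 + δ ^ 2 * k ^ 2 := by
      nlinarith [sq_nonneg (δ * k)]
    have : k ^ 2 = 0 := by
      rcases mul_eq_zero.mp hfac with h' | h'
      · exact h'
      · linarith
    exact pow_eq_zero_iff (n := 2) (by norm_num) |>.mp this
  refine ⟨?_, hk⟩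
  rw [hk] at him
  linarith [him]
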